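/- Let k be a field of characteristic p > 2, G = ℤ/nℤ with generator g and p | n, and let H = T(V) # kG be the smash product Hopf algebra where V has basis a, b with a·g = a, b·g = a + b, Δ(g) = g⊗g, Δ(a) = a⊗1 + g⊗a, Δ(b) = b⊗1 + g⊗b. Then the element ba - ab - (1/2)a² is (g²,1)-skew-primitive: Δ(ba - ab - (1/2)a²) = (ba - ab - (1/2)a²)⊗1 + g²⊗(ba - ab - (1/2)a²). -/

import Mathlib

noncomputable section

open TensorProduct

variable (k : Type*) [Field k]

def gF : FreeAlgebra k (Fin 3) := FreeAlgebra.ι k 0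

def aF : FreeAlgebra k (Fin 3) := FreeAlgebra.ι k 1

def bF : FreeAlgebra k (Fin 3) := FreeAlgebra.ι k 2

/-- Relations of the smash product `T(V) # kG`, where `V = span(a,b)` with
`a·g = a`, `b·g = a + b`: namely `g^n = 1`, `ag = ga`, `bg = ga + gb`. -/
def relH (n : ℕ) : FreeAlgebra k (Fin 3) → FreeAlgebra k (Fin 3) → Prop :=
  fun x y =>
    (x = (gF k) ^ n ∧ y = 1) ∨
    (x = aF k * gF k ∧ y = gF k * aF k) ∨
    (x = bF k * gF k ∧ y = gF k * aF k + gF k * bF k)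

/-- The smash product algebra `H₀ = T(V) # kG`. -/
abbrev H (n : ℕ) := RingQuot (relH k n)

def gH (n : ℕ) : H k n := RingQuot.mkAlgHom k (relH k n) (gF k)

def aH (n : ℕ) : H k n := RingQuot.mkAlgHom k (relH k n) (aF k)

def bH (n : ℕ) : H k n := RingQuot.mkAlgHom k (relH k n) (bF k)

theorem quadratic_skew_primitive (p n : ℕ) [Fact p.Prime] (hp : 2 < p) [CharP k p]
    (hn : 0 < n) (hpn : p ∣ n)
    (Δ : H k n →ₐ[k] H k n ⊗[k] H k n)
    (hg : Δ (gH k n) = gH k n ⊗ₜ gH k n)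
    (ha : Δ (aH k n) = aH k n ⊗ₜ 1 + gH k n ⊗ₜ aH k n)
    (hb : Δ (bH k n) = bH k n ⊗ₜ 1 + gH k n ⊗ₜ bH k n) :
    Δ (bH k n * aH k n - aH k n * bH k n - ((2 : k)⁻¹) • (aH k n) ^ 2) =
      (bH k n * aH k n - aH k n * bH k n - ((2 : k)⁻¹) • (aH k n) ^ 2) ⊗ₜ 1 +
      ((gH k n) ^ 2) ⊗ₜ (bH k n * aH k n - aH k n * bH k n - ((2 : k)⁻¹) • (aH k n) ^ 2) := by
  set a := aH k n with ha'
  set b := bH k n with hb'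
  set g := gH k n with hg'
  have h2 : (2:k) ≠ 0 := by
    intro h
    have hd : (p:ℕ) ∣ 2 := (CharP.cast_eq_zero_iff k p 2).mp (by exact_mod_cast h)
    exact absurd (Nat.le_of_dvd (by norm_num) hd) (by omega)
  have hag : a * g = g * a := by
    rw [ha', hg', aH, gH, ← map_mul, ← map_mul]
    exact RingQuot.mkAlgHom_rel k (Or.inr (Or.inl ⟨rfl, rfl⟩))
  have hbg : b * g = g * a + g * b := by
    rw [hb', hg', ha', aH, bH, gH, ← map_mul, ← map_mul, ← map_mul, ← map_add]
    exact RingQuot.mkAlgHom_rel k (Or.inr (Or.inr ⟨rfl, rfl⟩))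
  have key : Δ (b * a - a * b - ((2:k)⁻¹) • a ^ 2)
      = (b*a - a*b - ((2:k)⁻¹) • a^2) ⊗ₜ 1 + (g^2) ⊗ₜ (b*a - a*b - ((2:k)⁻¹) • a^2) := by
    rw [map_sub, map_sub, map_smul, map_mul, map_mul, map_pow, ha, hb]
    simp only [sq, mul_add, add_mul, Algebra.TensorProduct.tmul_mul_tmul, one_mul, mul_one,
      hag, hbg, add_tmul, sub_tmul, tmul_sub, smul_tmul', smul_add, smul_sub]
    simp only [← smul_tmul', tmul_smul]
    have hx : ∀ x : H k n ⊗[k] H k n, (2:k)⁻¹ • x + (2:k)⁻¹ • x = x := fun x => by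
      rw [← add_smul, ← two_mul, mul_inv_cancel₀ h2, one_smul]
    have hx' := hx ((g * a) ⊗ₜ[k] a)
    generalize (g * a) ⊗ₜ[k] a = x at hx' ⊢
    generalize (2:k)⁻¹ • x = y at hx' ⊢
    subst hx'
    abel
  exact key
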